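/- For $\theta \in [0,1]$ and $k \geq 1$, with $A_{k,1}(\theta) = \frac{2^{k-1}(k-1)!}{\prod_{j=k}^{2k-1}(j+\theta)}$ and $A_{k,1} = \frac{2^k k!(k-1)!}{(2k)!}$, we have $|A_{k,1}(\theta) - A_{k,1}| \leq \theta A_{k,1}$. -/

import Mathlib

open Finset

/-- `A_{k,1}(θ) = 2^{k-1}(k-1)! / ((k+θ)(k+1+θ)⋯(2k-1+θ))`. -/
noncomputable def Aone (k : ℕ) (θ : ℝ) : ℝ :=
  (2 : ℝ) ^ (k - 1) * (Nat.factorial (k - 1) : ℝ) /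
    ∏ j ∈ Finset.Ico k (2 * k), ((j : ℝ) + θ)

/-- `A_{k,1} = 2^k k!(k-1)!/(2k)!`. -/
noncomputable def AoneZero (k : ℕ) : ℝ :=
  (2 : ℝ) ^ k * (Nat.factorial k : ℝ) * (Nat.factorial (k - 1) : ℝ) /
    (Nat.factorial (2 * k) : ℝ)


-- Weierstrass: ∏ (1 - f i) ≥ 1 - ∑ f i for f i ∈ [0,1]
lemma weier {ι : Type*} [DecidableEq ι] (s : Finset ι) (f : ι → ℝ) (h0 : ∀ i ∈ s, 0 ≤ f i)
    (h1 : ∀ i ∈ s, f i ≤ 1) : 1 - ∑ i ∈ s, f i ≤ ∏ i ∈ s, (1 - f i) := by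
  induction s using Finset.induction_on with
  | empty => simp
  | @insert a s hx ih =>
    rw [Finset.prod_insert hx, Finset.sum_insert hx]
    have ih' := ih (fun i hi => h0 i (Finset.mem_insert_of_mem hi))
      (fun i hi => h1 i (Finset.mem_insert_of_mem hi))
    have ha0 := h0 a (Finset.mem_insert_self a s)
    have ha1 := h1 a (Finset.mem_insert_self a s)
    have hs0 : (0:ℝ) ≤ ∑ i ∈ s, f i := Finset.sum_nonneg fun i hi => h0 i (Finset.mem_insert_of_mem hi)
    nlinarith [ih', mul_nonneg ha0 hs0]

-- product of j over Ico k (2k) as nat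
lemma prod_ico_nat (k : ℕ) (hk : 1 ≤ k) :
    (Nat.factorial (k-1)) * ∏ j ∈ Finset.Ico k (2*k), j = Nat.factorial (2*k - 1) := by
  have h1 : Finset.prod (Finset.Ico 1 k) id * Finset.prod (Finset.Ico k (2*k)) id
      = Finset.prod (Finset.Ico 1 (2*k)) id :=
    Finset.prod_Ico_consecutive _ hk (by omega)
  have h2 : ∏ i ∈ Finset.Ico 1 k, i = Nat.factorial (k-1) := by
    have := Finset.prod_Ico_id_eq_factorial (k-1)
    rwa [show k - 1 + 1 = k by omega] at this
  have h3 : ∏ i ∈ Finset.Ico 1 (2*k), i = Nat.factorial (2*k-1) := by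
    have := Finset.prod_Ico_id_eq_factorial (2*k-1)
    rwa [show 2*k - 1 + 1 = 2*k by omega] at this
  simp only [id] at h1
  rw [h2, h3] at h1
  exact h1

/-- For `θ ∈ [0,1]` and `k ≥ 1`, `|A_{k,1}(θ) - A_{k,1}| ≤ θ A_{k,1}`. -/
theorem Aone_lipschitz (k : ℕ) (hk : 1 ≤ k) (θ : ℝ) (hθ : θ ∈ Set.Icc (0 : ℝ) 1) :
    |Aone k θ - AoneZero k| ≤ θ * AoneZero k := by
  obtain ⟨hθ0, hθ1⟩ := hθ
  set C : ℝ := (2 : ℝ) ^ (k - 1) * (Nat.factorial (k - 1) : ℝ) with hC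
  set P0 : ℝ := ∏ j ∈ Finset.Ico k (2 * k), ((j : ℝ)) with hP0
  set Pθ : ℝ := ∏ j ∈ Finset.Ico k (2 * k), ((j : ℝ) + θ) with hPθ
  have hCpos : 0 < C := by positivity
  have hP0pos : 0 < P0 := by
    apply Finset.prod_pos
    intro j hj
    have := (Finset.mem_Ico.mp hj).1
    have : 1 ≤ j := le_trans hk this
    exact_mod_cast Nat.lt_of_lt_of_le Nat.zero_lt_one this
  have hP0Pθ : P0 ≤ Pθ := by
    apply Finset.prod_le_prod
    · intro j hj
      have h1 : k ≤ j := (Finset.mem_Ico.mp hj).1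
      have : (1:ℝ) ≤ j := by exact_mod_cast le_trans hk h1
      linarith
    · intro j hj; linarith
  have hPθpos : 0 < Pθ := lt_of_lt_of_le hP0pos hP0Pθ
  -- AoneZero k = C / P0
  have hAZ : AoneZero k = C / P0 := by
    have hnat := prod_ico_nat k hk
    have hreal : (Nat.factorial (k-1) : ℝ) * P0 = (Nat.factorial (2*k-1) : ℝ) := by
      rw [hP0]
      have := congrArg (Nat.cast : ℕ → ℝ) hnat
      push_cast at this
      exact this
    have h2k : (Nat.factorial (2*k) : ℝ) = (2*k : ℕ) * (Nat.factorial (2*k-1) : ℝ) := by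
      exact_mod_cast (Nat.mul_factorial_pred (by omega)).symm
    have hkf : (Nat.factorial k : ℝ) = (k : ℕ) * (Nat.factorial (k-1) : ℝ) := by
      exact_mod_cast (Nat.mul_factorial_pred (by omega)).symm
    have h2pow : (2:ℝ)^k = 2 * (2:ℝ)^(k-1) := by
      rw [← pow_succ']
      congr 1; omega
    rw [AoneZero, hC, h2k, hkf, h2pow]
    have hfpos : (0:ℝ) < (Nat.factorial (2*k-1) : ℝ) := by exact_mod_cast Nat.factorial_pos _
    have hkpos : (0:ℝ) < (k:ℝ) := by exact_mod_cast hk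
    push_cast
    field_simp
    linear_combination hreal
  -- key: (1-θ) * Pθ ≤ P0
  have hkey : (1 - θ) * Pθ ≤ P0 := by
    have hdec : P0 = Pθ * ∏ j ∈ Finset.Ico k (2*k), (1 - θ/((j:ℝ)+θ)) := by
      rw [hP0, hPθ, ← Finset.prod_mul_distrib]
      apply Finset.prod_congr rfl
      intro j hj
      have h1 : k ≤ j := (Finset.mem_Ico.mp hj).1
      have hjpos : (0:ℝ) < (j:ℝ) + θ := by
        have : (1:ℝ) ≤ j := by exact_mod_cast le_trans hk h1
        linarith
      field_simp
      ring
    have hw := weier (Finset.Ico k (2*k)) (fun j => θ/((j:ℝ)+θ)) ?_ ?_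
    · have hsum : ∑ j ∈ Finset.Ico k (2*k), θ/((j:ℝ)+θ) ≤ θ := by
        have : ∀ j ∈ Finset.Ico k (2*k), θ/((j:ℝ)+θ) ≤ θ/k := by
          intro j hj
          have h1 : k ≤ j := (Finset.mem_Ico.mp hj).1
          have hkr : (0:ℝ) < k := by exact_mod_cast hk
          apply div_le_div_of_nonneg_left hθ0 hkr
          have : (k:ℝ) ≤ j := by exact_mod_cast h1
          linarith
        calc ∑ j ∈ Finset.Ico k (2*k), θ/((j:ℝ)+θ) ≤ ∑ _j ∈ Finset.Ico k (2*k), θ/(k:ℝ) :=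
              Finset.sum_le_sum this
          _ = k * (θ/(k:ℝ)) := by
              rw [Finset.sum_const, Nat.card_Ico, show 2*k-k = k from by omega, nsmul_eq_mul]
          _ = θ := by field_simp
      have hprodge : 1 - θ ≤ ∏ j ∈ Finset.Ico k (2*k), (1 - θ/((j:ℝ)+θ)) := by
        calc 1 - θ ≤ 1 - ∑ j ∈ Finset.Ico k (2*k), θ/((j:ℝ)+θ) := by linarith
          _ ≤ _ := hw
      rw [hdec]
      calc (1-θ) * Pθ = Pθ * (1-θ) := by ring
        _ ≤ Pθ * ∏ j ∈ Finset.Ico k (2*k), (1 - θ/((j:ℝ)+θ)) := by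
            apply mul_le_mul_of_nonneg_left hprodge (le_of_lt hPθpos)
    · intro j hj
      have h1 : k ≤ j := (Finset.mem_Ico.mp hj).1
      have : (1:ℝ) ≤ j := by exact_mod_cast le_trans hk h1
      positivity
    · intro j hj
      have h1 : k ≤ j := (Finset.mem_Ico.mp hj).1
      have hj1 : (1:ℝ) ≤ j := by exact_mod_cast le_trans hk h1
      rw [div_le_one (by linarith)]
      linarith
  have hAle : Aone k θ ≤ AoneZero k := by
    rw [Aone, hAZ, ← hPθ, ← hC]
    exact div_le_div_of_nonneg_left (le_of_lt hCpos) hP0pos hP0Pθ |>.trans_eq rfl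
  rw [abs_of_nonpos (by linarith), hAZ, Aone, ← hPθ, ← hC]
  rw [neg_sub]
  rw [div_sub_div _ _ (ne_of_gt hP0pos) (ne_of_gt hPθpos)]
  rw [div_le_iff₀ (by positivity)]
  have : C * Pθ - C * P0 ≤ θ * C * Pθ := by nlinarith [hkey]
  calc C * Pθ - P0 * C = C * Pθ - C * P0 := by ring
    _ ≤ θ * C * Pθ := this
    _ = θ * (C / P0) * (P0 * Pθ) := by field_simp
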